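/- arXiv:1411.2289 — 4 statements merged into one kernel-verified Lean document; each statement's English description precedes it below -/
import Mathlib

section
/- There is no Z^2 Markov random field μ with supp(μ) = C_2(4) (the 4-checkerboard shift) satisfying strong spatial mixing with any rate f(n) → 0. -/
open MeasureTheory

abbrev Site (d : ℕ) := Fin d → ℤ

def dist1 {d : ℕ} (p q : Site d) : ℕ := ∑ i, (p i - q i).natAbs

/-- Outer boundary of a set of sites. -/
def bd {d : ℕ} (S : Set (Site d)) : Set (Site d) :=
  {p | p ∉ S ∧ ∃ q ∈ S, dist1 p q = 1}

/-- Cylinder set: points agreeing with `u` on `S`. -/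
def cyl {d : ℕ} {A : Type*} (S : Set (Site d)) (u : Site d → A) : Set (Site d → A) :=
  {x | ∀ p ∈ S, x p = u p}

noncomputable def condR {d : ℕ} {A : Type*} [MeasurableSpace A]
    (μ : Measure (Site d → A)) (E B : Set (Site d → A)) : ℝ :=
  (μ (E ∩ B) / μ B).toReal

def ShiftInvariant {d : ℕ} {A : Type*} [MeasurableSpace A]
    (μ : Measure (Site d → A)) : Prop :=
  ∀ (t : Site d) (E : Set (Site d → A)),
    μ ((fun (x : Site d → A) (q : Site d) => x (q + t)) ⁻¹' E) = μ E

/-- Markov random field property. -/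
def IsMRF {d : ℕ} {A : Type*} [MeasurableSpace A] (μ : Measure (Site d → A)) : Prop :=
  ∀ S : Set (Site d), S.Finite → ∀ u : Site d → A,
    ∀ T : Set (Site d), T.Finite → bd S ⊆ T → Disjoint S T →
    ∀ δ : Site d → A, 0 < μ (cyl T δ) →
      condR μ (cyl S u) (cyl T δ) = condR μ (cyl S u) (cyl (bd S) δ)

/-- The support of `μ`: points all of whose cylinder sets have positive measure. -/
def mrfSupport {d : ℕ} {A : Type*} [MeasurableSpace A]
    (μ : Measure (Site d → A)) : Set (Site d → A) :=
  {x | ∀ S : Set (Site d), S.Finite → 0 < μ (cyl S x)}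

def TSSM {d : ℕ} {A : Type*} (X : Set (Site d → A)) (g : ℕ) : Prop :=
  ∀ U S V : Set (Site d), U.Finite → S.Finite → V.Finite →
    Disjoint U S → Disjoint S V → Disjoint U V →
    (∀ p ∈ U, ∀ q ∈ V, g ≤ dist1 p q) →
    ∀ u s v : Site d → A,
      (∃ x ∈ X, (∀ p ∈ U, x p = u p) ∧ (∀ p ∈ S, x p = s p)) →
      (∃ x ∈ X, (∀ p ∈ S, x p = s p) ∧ (∀ p ∈ V, x p = v p)) →
      ∃ x ∈ X, (∀ p ∈ U, x p = u p) ∧ (∀ p ∈ S, x p = s p) ∧ ∀ p ∈ V, x p = v p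

noncomputable def setD {d : ℕ} (U V : Set (Site d)) : ℕ :=
  sInf {n : ℕ | ∃ p ∈ U, ∃ q ∈ V, dist1 p q = n}

def SSM {d : ℕ} {A : Type*} [MeasurableSpace A]
    (μ : Measure (Site d → A)) (f : ℕ → ℝ) : Prop :=
  ∀ W : Set (Site d), W.Finite → ∀ U : Set (Site d), U ⊆ W → ∀ u : Site d → A,
    ∀ δ₁ δ₂ : Site d → A, 0 < μ (cyl (bd W) δ₁) → 0 < μ (cyl (bd W) δ₂) →
      |condR μ (cyl U u) (cyl (bd W) δ₁) - condR μ (cyl U u) (cyl (bd W) δ₂)| ≤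
        (U.ncard : ℝ) * f (setD U {p ∈ bd W | δ₁ p ≠ δ₂ p})

def unitVec {d : ℕ} (i : Fin d) : Site d := fun j => if j = i then 1 else 0

/-- The ℤ² 4-checkerboard: proper 4-colourings of ℤ². -/
def C24 : Set (Site 2 → Fin 4) :=
  {x | ∀ (p : Site 2) (i : Fin 2), x p ≠ x (p + unitVec i)}


set_option linter.unusedSectionVars false
set_option linter.unusedVariables false
set_option maxHeartbeats 1000000

section Chain
variable {d : ℕ} {A : Type*} [MeasurableSpace A] [Fintype A] [Inhabited A]
variable (μ : Measure (Site d → A))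

lemma cyl_mono {S T : Set (Site d)} {y x : Site d → A} (hST : S ⊆ T)
    (hagree : ∀ p ∈ S, y p = x p) : cyl T y ⊆ cyl S x := by
  intro z hz p hp
  rw [hz p (hST hp), hagree p hp]

lemma step_exists {T : Set (Site d)} {y : Site d → A} (h : 0 < μ (cyl T y)) (p : Site d)
    (hp : p ∉ T) :
    ∃ a : A, 0 < μ (cyl (insert p T) (Function.update y p a)) := by
  by_contra hna
  push_neg at hna
  have hsub : cyl T y ⊆ ⋃ a : A, cyl (insert p T) (Function.update y p a) := by
    intro x hx
    refine Set.mem_iUnion.2 ⟨x p, ?_⟩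
    intro q hq
    rcases hq with rfl | hq
    · simp
    · rw [Function.update_of_ne (by rintro rfl; exact hp hq), hx q hq]
  have : μ (⋃ a : A, cyl (insert p T) (Function.update y p a)) = 0 :=
    measure_iUnion_null fun a => le_antisymm (hna a) zero_le
  exact absurd (le_antisymm ((measure_mono hsub).trans this.le) zero_le) h.ne'

open Classical in
noncomputable def chain (e : ℕ → Site d) (S : Set (Site d)) (u : Site d → A) :
    ℕ → Set (Site d) × (Site d → A)
  | 0 => (S, u)
  | (n+1) =>
    let T := chain e S u n |>.1
    let y := chain e S u n |>.2
    let p := e n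
    if p ∈ T then (T, y)
    else if h : ∃ a : A, 0 < μ (cyl (insert p T) (Function.update y p a))
      then (insert p T, Function.update y p h.choose)
      else (T, y)

variable {μ} {e : ℕ → Site d} {S : Set (Site d)} {u : Site d → A}

lemma chain_pos (h : 0 < μ (cyl S u)) : ∀ n, 0 < μ (cyl (chain μ e S u n).1 (chain μ e S u n).2)
  | 0 => h
  | (n+1) => by
    have ih := chain_pos h n
    simp only [chain]
    split
    · exact ih
    · split
      · next h' => exact h'.choose_spec
      · exact ih

lemma chain_mono_succ (n : ℕ) :
    (chain μ e S u n).1 ⊆ (chain μ e S u (n+1)).1 ∧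
    ∀ p ∈ (chain μ e S u n).1, (chain μ e S u (n+1)).2 p = (chain μ e S u n).2 p := by
  simp only [chain]
  split
  · exact ⟨le_refl _, fun _ _ => rfl⟩
  · next hp =>
    split
    · exact ⟨Set.subset_insert _ _, fun q hq =>
        Function.update_of_ne (by rintro rfl; exact hp hq) _ _⟩
    · exact ⟨le_refl _, fun _ _ => rfl⟩

lemma chain_mono (h0 : 0 < μ (cyl S u)) {m n : ℕ} (hmn : m ≤ n) :
    (chain μ e S u m).1 ⊆ (chain μ e S u n).1 ∧
    ∀ p ∈ (chain μ e S u m).1, (chain μ e S u n).2 p = (chain μ e S u m).2 p := by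
  induction n with
  | zero => rw [Nat.le_zero.1 hmn]; exact ⟨le_refl _, fun _ _ => rfl⟩
  | succ n ih =>
    rcases Nat.lt_or_ge m (n+1) with hlt | hge
    · have ih' := ih (Nat.lt_succ_iff.1 hlt)
      refine ⟨ih'.1.trans (chain_mono_succ n).1, fun p hp => ?_⟩
      rw [(chain_mono_succ n).2 p (ih'.1 hp), ih'.2 p hp]
    · have : m = n + 1 := le_antisymm hmn hge
      subst this; exact ⟨le_refl _, fun _ _ => rfl⟩

lemma chain_covers (h0 : 0 < μ (cyl S u)) (n : ℕ) : e n ∈ (chain μ e S u (n+1)).1 := by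
  have hpos := chain_pos (e := e) h0 n
  simp only [chain]
  split
  · next h => exact h
  · next hp =>
    rw [dif_pos (step_exists μ hpos (e n) hp)]
    exact Set.mem_insert _ _

lemma support_extension (h0 : 0 < μ (cyl S u)) (hS : S.Finite) [Countable (Site d)] :
    ∃ x ∈ mrfSupport μ, ∀ p ∈ S, x p = u p := by
  obtain ⟨e, he⟩ := exists_surjective_nat (Site d)
  classical
  -- index of a site
  let idx : Site d → ℕ := fun p => (he p).choose
  have hidx : ∀ p, e (idx p) = p := fun p => (he p).choose_spec
  set x : Site d → A := fun p => (chain μ e S u (idx p + 1)).2 p with hx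
  have hmem : ∀ p, p ∈ (chain μ e S u (idx p + 1)).1 := by
    intro p; have := chain_covers (e := e) h0 (idx p); rwa [hidx p] at this
  have hstab : ∀ p, ∀ m, idx p + 1 ≤ m → (chain μ e S u m).2 p = x p ∧ p ∈ (chain μ e S u m).1 := by
    intro p m hm
    obtain ⟨h1, h2⟩ := chain_mono (e := e) h0 hm
    exact ⟨h2 p (hmem p), h1 (hmem p)⟩
  refine ⟨x, ?_, ?_⟩
  · intro F hF
    obtain ⟨M, hM⟩ : ∃ M : ℕ, ∀ p ∈ F, idx p + 1 ≤ M := by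
      refine ⟨hF.toFinset.sup (fun p => idx p + 1), fun p hp => ?_⟩
      exact Finset.le_sup (f := fun p => idx p + 1) (hF.mem_toFinset.2 hp)
    have hsub : cyl (chain μ e S u M).1 (chain μ e S u M).2 ⊆ cyl F x :=
      cyl_mono (fun p hp => (hstab p M (hM p hp)).2) (fun p hp => (hstab p M (hM p hp)).1)
    exact lt_of_lt_of_le (chain_pos h0 M) (measure_mono hsub)
  · intro p hp
    have hS0 : ∀ m, p ∈ (chain μ e S u m).1 ∧ (chain μ e S u m).2 p = u p := by
      intro m
      obtain ⟨h1, h2⟩ := chain_mono (e := e) (m := 0) h0 (Nat.zero_le m)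
      exact ⟨h1 hp, h2 p hp⟩
    rw [hx]
    exact (hS0 (idx p + 1)).2

end Chain

/-! ### concrete sites -/

def st (a b : ℤ) : Site 2 := fun j => if j = 0 then a else b

@[simp] lemma st_0 (a b : ℤ) : st a b 0 = a := rfl
@[simp] lemma st_1 (a b : ℤ) : st a b 1 = b := rfl

lemma site_eq (p : Site 2) : p = st (p 0) (p 1) := by
  funext j; fin_cases j <;> rfl

lemma dist1_st (a b c e : ℤ) : dist1 (st a b) (st c e) = (a - c).natAbs + (b - e).natAbs := by
  simp [dist1, Fin.sum_univ_two]

lemma add_unitVec0 (p : Site 2) : p + unitVec 0 = st (p 0 + 1) (p 1) := by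
  funext j; fin_cases j <;> simp [unitVec, Fin.ext_iff, st]

lemma add_unitVec1 (p : Site 2) : p + unitVec 1 = st (p 0) (p 1 + 1) := by
  funext j; fin_cases j <;> simp [unitVec, Fin.ext_iff, st]

/-! ### the two colourings -/

def col (s : Bool) (p : Site 2) : Fin 4 :=
  if p 1 % 2 = 0 then
    (if p 0 % 2 = 0 then (if s then 1 else 0) else (if s then 0 else 1))
  else
    (if (p 0 + (p 1 - 1) / 2) % 2 = 0 then 2 else 3)

lemma col_mem_C24 (s : Bool) : col s ∈ C24 := by
  intro p i
  have hi : i = 0 ∨ i = 1 := by omega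
  rcases hi with rfl | rfl
  · rw [add_unitVec0]
    unfold col
    rw [st_0, st_1]
    generalize (p 1 - 1) / 2 = z
    have h1 : ((p 0 + 1) % 2 = 0) ↔ ¬ (p 0 % 2 = 0) := by omega
    have h2 : ((p 0 + 1 + z) % 2 = 0) ↔ ¬ ((p 0 + z) % 2 = 0) := by omega
    simp only [h1, h2]
    cases s <;> split_ifs <;> simp_all <;> decide
  · rw [add_unitVec1]
    unfold col
    rw [st_0, st_1]
    have h1 : ((p 1 + 1) % 2 = 0) ↔ ¬ (p 1 % 2 = 0) := by omega
    simp only [h1]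
    cases s <;> split_ifs <;> simp_all <;> decide

lemma col_top (s : Bool) (k : ℤ) : col s (st k 1) = if k % 2 = 0 then 2 else 3 := by
  unfold col; norm_num

lemma col_bot (s : Bool) (k : ℤ) : col s (st k (-1)) = if k % 2 = 0 then 3 else 2 := by
  unfold col
  rw [st_0, st_1]
  have h : ((-1:ℤ) - 1) / 2 = -1 := by norm_num
  rw [h]
  have h2 : ((k + -1) % 2 = 0) ↔ ¬ (k % 2 = 0) := by omega
  have h3 : ¬ ((-1:ℤ) % 2 = 0) := by norm_num
  rw [if_neg h3]
  by_cases hk : k % 2 = 0 <;> simp [hk, h2]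

lemma col_row0 (s : Bool) (k : ℤ) :
    col s (st k 0) = if k % 2 = 0 then (if s then 1 else 0) else (if s then 0 else 1) := by
  unfold col; norm_num

lemma col_ne_row_even {p : Site 2} (h : col false p ≠ col true p) : p 1 % 2 = 0 := by
  by_contra hodd
  exact h (by unfold col; simp [hodd])

/-! ### the corridor -/

def Wn (n : ℕ) : Set (Site 2) := (fun k : ℤ => st k 0) '' Set.Icc (-(n:ℤ)) n

lemma Wn_finite (n : ℕ) : (Wn n).Finite := (Set.finite_Icc _ _).image _

lemma mem_Wn {n : ℕ} {p : Site 2} : p ∈ Wn n ↔ p 1 = 0 ∧ -(n:ℤ) ≤ p 0 ∧ p 0 ≤ n := by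
  constructor
  · rintro ⟨k, hk, rfl⟩
    exact ⟨rfl, by simpa using hk.1, by simpa using hk.2⟩
  · rintro ⟨h1, h2, h3⟩
    exact ⟨p 0, ⟨h2, h3⟩, by rw [← h1]; exact (site_eq p).symm⟩

lemma top_mem_bd {n : ℕ} {k : ℤ} (h1 : -(n:ℤ) ≤ k) (h2 : k ≤ n) : st k 1 ∈ bd (Wn n) := by
  refine ⟨fun h => by simp [mem_Wn] at h, st k 0, mem_Wn.2 ⟨rfl, by simpa, by simpa⟩, ?_⟩
  rw [dist1_st]; norm_num

lemma bot_mem_bd {n : ℕ} {k : ℤ} (h1 : -(n:ℤ) ≤ k) (h2 : k ≤ n) : st k (-1) ∈ bd (Wn n) := by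
  refine ⟨fun h => by simp [mem_Wn] at h, st k 0, mem_Wn.2 ⟨rfl, by simpa, by simpa⟩, ?_⟩
  rw [dist1_st]; norm_num

lemma lcap_mem_bd (n : ℕ) : st (-(n:ℤ)-1) 0 ∈ bd (Wn n) := by
  refine ⟨fun h => ?_, st (-(n:ℤ)) 0, mem_Wn.2 ⟨rfl, le_refl _, by rw [st_0]; omega⟩, ?_⟩
  · rw [mem_Wn, st_0, st_1] at h; omega
  · rw [dist1_st]
    have : (-(n:ℤ)-1 - -(n:ℤ)) = -1 := by ring
    rw [this]; norm_num

lemma rcap_mem_bd (n : ℕ) : st ((n:ℤ)+1) 0 ∈ bd (Wn n) := by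
  refine ⟨fun h => ?_, st (n:ℤ) 0, mem_Wn.2 ⟨rfl, by rw [st_0]; omega, le_refl _⟩, ?_⟩
  · rw [mem_Wn, st_0, st_1] at h; omega
  · rw [dist1_st]
    have : ((n:ℤ)+1 - (n:ℤ)) = 1 := by ring
    rw [this]; norm_num

lemma bd_Wn_subset (n : ℕ) :
    bd (Wn n) ⊆ {p : Site 2 | p 0 ∈ Set.Icc (-(n:ℤ)-1) ((n:ℤ)+1) ∧ p 1 ∈ Set.Icc (-1:ℤ) 1} := by
  rintro p ⟨hp, q, hq, hd⟩
  rw [mem_Wn] at hq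
  rw [site_eq p, site_eq q, dist1_st] at hd
  simp only [Set.mem_setOf_eq, Set.mem_Icc]
  omega

lemma bd_Wn_finite (n : ℕ) : (bd (Wn n)).Finite := by
  refine Set.Finite.subset ?_ (bd_Wn_subset n)
  have hsub : {p : Site 2 | p 0 ∈ Set.Icc (-(n:ℤ)-1) ((n:ℤ)+1) ∧ p 1 ∈ Set.Icc (-1:ℤ) 1} ⊆
      (fun z : ℤ × ℤ => st z.1 z.2) '' ((Set.Icc (-(n:ℤ)-1) ((n:ℤ)+1)) ×ˢ (Set.Icc (-1:ℤ) 1)) := by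
    rintro p ⟨h1, h2⟩
    exact ⟨(p 0, p 1), ⟨h1, h2⟩, (site_eq p).symm⟩
  exact (((Set.finite_Icc _ _).prod (Set.finite_Icc _ _)).image _).subset hsub

/-- points of `bd (Wn n)` where the two colourings disagree are far from the origin -/
lemma sigma_far {n : ℕ} {q : Site 2} (hq : q ∈ bd (Wn n)) (hne : col false q ≠ col true q) :
    q 1 = 0 ∧ ((n:ℤ) + 1 ≤ q 0 ∨ q 0 ≤ -((n:ℤ)+1)) := by
  have heven := col_ne_row_even hne
  obtain ⟨hp, r, hr, hd⟩ := hq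
  rw [mem_Wn] at hr
  rw [site_eq q, site_eq r, dist1_st] at hd
  have hq1 : q 1 = 0 := by omega
  refine ⟨hq1, ?_⟩
  by_contra hlt
  push_neg at hlt
  exact hp (mem_Wn.2 ⟨hq1, by omega, by omega⟩)

/-! forcing -/

lemma fin4_eq0 : ∀ a : Fin 4, a ≠ 2 → a ≠ 3 → a ≠ 1 → a = 0 := by decide
lemma fin4_eq1 : ∀ a : Fin 4, a ≠ 2 → a ≠ 3 → a ≠ 0 → a = 1 := by decide

lemma st_add1 (k : ℤ) (b : ℤ) : st k b + unitVec 1 = st k (b + 1) := by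
  rw [add_unitVec1, st_0, st_1]

lemma forced (n : ℕ) (s : Bool) (x : Site 2 → Fin 4) (hx : x ∈ C24)
    (hb : ∀ p ∈ bd (Wn n), x p = col s p) : x (st 0 0) = col s (st 0 0) := by
  have key : ∀ m : ℕ, m ≤ n + 1 → x (st (-(n:ℤ)-1+m) 0) = col s (st (-(n:ℤ)-1+m) 0) := by
    intro m
    induction m with
    | zero =>
      intro _
      have h0 : (-(n:ℤ)-1+(0:ℕ)) = -(n:ℤ)-1 := by push_cast; ring
      rw [h0]
      exact hb _ (lcap_mem_bd n)
    | succ m ih =>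
      intro hm
      have ih' := ih (by omega)
      set k : ℤ := -(n:ℤ)-1+(m+1 : ℕ) with hk
      have hkm : k - 1 = -(n:ℤ)-1+(m : ℕ) := by push_cast [hk]; ring
      have hk1 : -(n:ℤ) ≤ k := by push_cast [hk]; omega
      have hk2 : k ≤ n := by push_cast [hk]; omega
      rw [← hkm] at ih'
      -- boundary values
      have htop : x (st k 1) = col s (st k 1) := hb _ (top_mem_bd hk1 hk2)
      have hbot : x (st k (-1)) = col s (st k (-1)) := hb _ (bot_mem_bd hk1 hk2)
      -- edges
      have e1 : x (st k 0) ≠ x (st k 1) := by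
        have := hx (st k 0) 1
        rwa [st_add1, show (0:ℤ)+1 = 1 from rfl] at this
      have e2 : x (st k (-1)) ≠ x (st k 0) := by
        have := hx (st k (-1)) 1
        rwa [st_add1, show (-1:ℤ)+1 = 0 by ring] at this
      have e3 : x (st (k-1) 0) ≠ x (st k 0) := by
        have := hx (st (k-1) 0) 0
        rw [add_unitVec0, st_0, st_1, show k-1+1 = k by ring] at this
        exact this
      rw [htop, col_top] at e1
      rw [hbot, col_bot] at e2
      rw [ih', col_row0] at e3
      rw [col_row0]
      have hpar : ((k-1) % 2 = 0) ↔ ¬ (k % 2 = 0) := by omega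
      by_cases hk0 : k % 2 = 0
      · rw [if_pos hk0] at e1 ⊢
        rw [if_pos hk0] at e2
        rw [if_neg (by omega : ¬ ((k-1) % 2 = 0))] at e3
        cases s
        · have e3' : (1 : Fin 4) ≠ x (st k 0) := e3
          show x (st k 0) = 0
          exact fin4_eq0 _ e1 e2.symm e3'.symm
        · have e3' : (0 : Fin 4) ≠ x (st k 0) := e3
          show x (st k 0) = 1
          exact fin4_eq1 _ e1 e2.symm e3'.symm
      · rw [if_neg hk0] at e1 e2 ⊢
        rw [if_pos (by omega : ((k-1) % 2 = 0))] at e3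
        cases s
        · have e3' : (0 : Fin 4) ≠ x (st k 0) := e3
          show x (st k 0) = 1
          exact fin4_eq1 _ e2.symm e1 e3'.symm
        · have e3' : (1 : Fin 4) ≠ x (st k 0) := e3
          show x (st k 0) = 0
          exact fin4_eq0 _ e2.symm e1 e3'.symm
  have := key (n+1) le_rfl
  have h0 : (-(n:ℤ)-1+((n+1 : ℕ) : ℤ)) = 0 := by push_cast; ring
  rwa [h0] at this

/-! ### measure lemmas -/

lemma condR_eq_one {μ : Measure (Site 2 → Fin 4)} [IsProbabilityMeasure μ]
    {E B : Set (Site 2 → Fin 4)} (hB : 0 < μ B) (hnull : μ (B \ E) = 0) :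
    condR μ E B = 1 := by
  have h1 : μ (E ∩ B) = μ B := by
    refine le_antisymm (measure_mono Set.inter_subset_right) ?_
    calc μ B ≤ μ (B ∩ E) + μ (B \ E) := measure_le_inter_add_diff μ B E
    _ = μ (E ∩ B) := by rw [hnull, add_zero, Set.inter_comm]
  rw [condR, h1, ENNReal.div_self hB.ne' (measure_ne_top μ B)]
  exact ENNReal.toReal_one

lemma condR_eq_zero {μ : Measure (Site 2 → Fin 4)}
    {E B : Set (Site 2 → Fin 4)} (hnull : μ (E ∩ B) = 0) :
    condR μ E B = 0 := by
  rw [condR, hnull, ENNReal.zero_div, ENNReal.toReal_zero]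

lemma null_C24_compl {μ : Measure (Site 2 → Fin 4)} (hsupp : mrfSupport μ = C24) :
    μ C24ᶜ = 0 := by
  have hsub : C24ᶜ ⊆ ⋃ t : Site 2 × Fin 2 × Fin 4,
      cyl {t.1, t.1 + unitVec t.2.1} (fun _ => t.2.2) := by
    intro x hx
    simp only [C24, Set.mem_compl_iff, Set.mem_setOf_eq, not_forall, not_not] at hx
    obtain ⟨p, i, hpi⟩ := hx
    refine Set.mem_iUnion.2 ⟨(p, i, x p), ?_⟩
    intro q hq
    rcases hq with rfl | hq
    · rfl
    · simp only [Set.mem_singleton_iff] at hq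
      subst hq
      exact hpi.symm
  refine measure_mono_null hsub (measure_iUnion_null ?_)
  rintro ⟨p, i, a⟩
  by_contra hpos
  have hpos' : 0 < μ (cyl {p, p + unitVec i} (fun _ => a)) :=
    lt_of_le_of_ne zero_le (Ne.symm hpos)
  obtain ⟨x, hxsupp, hxa⟩ := support_extension hpos'
    ((Set.finite_singleton (p + unitVec i)).insert p)
  rw [hsupp] at hxsupp
  exact hxsupp p i (by
    rw [hxa p (Set.mem_insert _ _), hxa (p + unitVec i) (Set.mem_insert_of_mem _ rfl)])


/-- No shift-invariant MRF fully supported on the ℤ² 4-checkerboard satisfies strong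
spatial mixing with any vanishing rate. -/
theorem no_ssm_on_c24 (μ : Measure (Site 2 → Fin 4)) [IsProbabilityMeasure μ]
    (hinv : ShiftInvariant μ) (hmrf : IsMRF μ) (hsupp : mrfSupport μ = C24)
    (f : ℕ → ℝ) (hf0 : ∀ n, 0 ≤ f n)
    (hftend : Filter.Tendsto f Filter.atTop (nhds 0)) :
    ¬ SSM μ f := by
  intro hssm
  obtain ⟨N, hN⟩ : ∃ N : ℕ, ∀ m ≥ N, f m < 1 :=
    Filter.eventually_atTop.1 (hftend.eventually_lt_const one_pos)
  -- positivity of the two boundary conditions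
  have hpos : ∀ s : Bool, 0 < μ (cyl (bd (Wn N)) (col s)) := by
    intro s
    have hcol : col s ∈ mrfSupport μ := by rw [hsupp]; exact col_mem_C24 s
    exact hcol _ (bd_Wn_finite N)
  -- U = center
  have hUsub : ({st 0 0} : Set (Site 2)) ⊆ Wn N :=
    Set.singleton_subset_iff.2 (mem_Wn.2 ⟨rfl, by rw [st_0]; omega, by rw [st_0]; omega⟩)
  have hnull := null_C24_compl hsupp
  let E : Set (Site 2 → Fin 4) := cyl {st 0 0} (col false)
  let B : Bool → Set (Site 2 → Fin 4) := fun s => cyl (bd (Wn N)) (col s)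
  have hcol00 : col false (st 0 0) = 0 := by rw [col_row0]; norm_num
  have hcol00' : col true (st 0 0) = 1 := by rw [col_row0]; norm_num
  have hmemE : ∀ x, x ∈ E ↔ x (st 0 0) = col false (st 0 0) := by
    intro x
    constructor
    · intro h; exact h _ rfl
    · intro h q hq
      rw [Set.mem_singleton_iff] at hq; subst hq; exact h
  -- conditional probabilities
  have hc1 : condR μ E (B false) = 1 := by
    refine condR_eq_one (hpos false) (measure_mono_null ?_ hnull)
    rintro x ⟨hxB, hxE⟩
    intro hxC
    exact hxE ((hmemE x).2 (forced N false x hxC hxB))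
  have hc2 : condR μ E (B true) = 0 := by
    refine condR_eq_zero (measure_mono_null ?_ hnull)
    rintro x ⟨hxE, hxB⟩
    intro hxC
    have h1 := forced N true x hxC hxB
    have h2 := (hmemE x).1 hxE
    rw [hcol00] at h2
    rw [hcol00', h2] at h1
    exact absurd h1 (by decide)
  -- distance bound
  have hrcapSg : st ((N:ℤ)+1) 0 ∈ {p ∈ bd (Wn N) | col false p ≠ col true p} := by
    refine ⟨rcap_mem_bd N, ?_⟩
    rw [col_row0, col_row0]
    by_cases h : ((N:ℤ)+1) % 2 = 0 <;> simp [h]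
  have hne : ∃ m, ∃ p ∈ ({st 0 0} : Set (Site 2)), ∃ q ∈ {p ∈ bd (Wn N) | col false p ≠ col true p}, dist1 p q = m :=
    ⟨dist1 (st 0 0) (st ((N:ℤ)+1) 0), st 0 0, rfl, st ((N:ℤ)+1) 0, hrcapSg, rfl⟩
  have hD : N + 1 ≤ setD {st 0 0} {p ∈ bd (Wn N) | col false p ≠ col true p} := by
    have hmem := Nat.sInf_mem (show Set.Nonempty {m | ∃ p ∈ ({st 0 0} : Set (Site 2)),
        ∃ q ∈ {p ∈ bd (Wn N) | col false p ≠ col true p}, dist1 p q = m} from hne)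
    obtain ⟨p, hp, q, hq, hd⟩ := hmem
    rw [Set.mem_singleton_iff] at hp; subst hp
    obtain ⟨hq1, hq0⟩ := sigma_far hq.1 hq.2
    rw [site_eq q, dist1_st] at hd
    rw [setD]
    omega
  -- apply SSM
  have happ := hssm (Wn N) (Wn_finite N) {st 0 0} hUsub (col false)
    (col false) (col true) (hpos false) (hpos true)
  rw [show condR μ (cyl {st 0 0} (col false)) (cyl (bd (Wn N)) (col false)) = 1 from hc1,
    show condR μ (cyl {st 0 0} (col false)) (cyl (bd (Wn N)) (col true)) = 0 from hc2,
    Set.ncard_singleton] at happ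
  have hfD : f (setD {st 0 0} {p ∈ bd (Wn N) | col false p ≠ col true p}) < 1 := hN _ (by omega)
  push_cast at happ
  rw [sub_zero, abs_one, one_mul] at happ
  linarith
end

section
/- For every M ≥ 2, the Z^2 Iceberg model I_M satisfies topological strong spatial mixing with gap g = 3. -/
lemma sign_mul_le (a b : ℤ) (ha : a ≠ 0) (h : -1 ≤ a * b) : -1 ≤ a.sign * b := by
  rcases lt_trichotomy a 0 with h1 | h1 | h1
  · rw [Int.sign_eq_neg_one_of_neg h1]
    by_contra hc
    push_neg at hc
    have hb : 2 ≤ b := by omega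
    nlinarith [show a ≤ -1 by omega]
  · exact absurd h1 ha
  · rw [Int.sign_eq_one_of_pos h1]
    by_contra hc
    push_neg at hc
    have hb : b ≤ -2 := by omega
    nlinarith [show 1 ≤ a by omega]

lemma mul_sign_le (a b : ℤ) (hb : b ≠ 0) (h : -1 ≤ a * b) : -1 ≤ a * b.sign := by
  rw [mul_comm]
  exact sign_mul_le b a hb (by rw [mul_comm]; exact h)

lemma sign_sign_le (a b : ℤ) : -1 ≤ a.sign * b.sign := by
  rw [← Int.sign_mul]
  rcases lt_trichotomy (a*b) 0 with h | h | h
  · rw [Int.sign_eq_neg_one_of_neg h]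
  · rw [h]; decide
  · rw [Int.sign_eq_one_of_pos h]; decide

lemma dist1_step {d : ℕ} (p q : Site d) (i : Fin d) :
    dist1 p q ≤ dist1 (p + unitVec i) q + 1 ∧ dist1 (p + unitVec i) q ≤ dist1 p q + 1 := by
  have key : ∀ j, ((p + unitVec i) j - q j).natAbs ≤ (p j - q j).natAbs + (if j = i then 1 else 0)
           ∧ (p j - q j).natAbs ≤ ((p + unitVec i) j - q j).natAbs + (if j = i then 1 else 0) := by
    intro j
    simp only [Pi.add_apply, unitVec]
    split <;> omega
  have hone : (∑ j : Fin d, if j = i then (1:ℕ) else 0) = 1 := by simp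
  constructor
  · calc dist1 p q ≤ ∑ j, (((p + unitVec i) j - q j).natAbs + if j = i then 1 else 0) :=
        Finset.sum_le_sum fun j _ => (key j).2
      _ = dist1 (p + unitVec i) q + 1 := by
        rw [Finset.sum_add_distrib, hone]; rfl
  · calc dist1 (p + unitVec i) q ≤ ∑ j, ((p j - q j).natAbs + if j = i then 1 else 0) :=
        Finset.sum_le_sum fun j _ => (key j).1
      _ = dist1 p q + 1 := by
        rw [Finset.sum_add_distrib, hone]; rfl

/-- The ℤ² Iceberg model with alphabet `{-M, …, -1, +1, …, +M}`: adjacent values must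
have product at least `-1`. -/
def Iceberg (M : ℕ) : Set (Site 2 → ℤ) :=
  {x | (∀ p : Site 2, x p ≠ 0 ∧ (x p).natAbs ≤ M) ∧
       ∀ (p : Site 2) (i : Fin 2), -1 ≤ x p * x (p + unitVec i)}

/-- For every `M ≥ 2`, the ℤ² Iceberg model satisfies TSSM with gap `3`. -/
theorem iceberg_tssm (M : ℕ) (hM : 2 ≤ M) : TSSM (Iceberg M) 3 := by
  intro U S V hU hS hV hUS hSV hUV hgap u s v hx' hy'
  obtain ⟨x, ⟨hx1, hx2⟩, hxu, hxs⟩ := hx'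
  obtain ⟨y, ⟨hy1, hy2⟩, hys, hyv⟩ := hy'
  rcases V.eq_empty_or_nonempty with rfl | hVne
  · exact ⟨x, ⟨hx1, hx2⟩, hxu, hxs, fun p hp => absurd hp (Set.notMem_empty p)⟩
  classical
  set D : Site 2 → ℕ := fun p => sInf ((dist1 p) '' V) with hD
  have hD_le : ∀ p : Site 2, ∀ q ∈ V, D p ≤ dist1 p q := fun p q hq => Nat.sInf_le ⟨q, hq, rfl⟩
  have hD_mem : ∀ p : Site 2, ∃ q ∈ V, dist1 p q = D p := by
    intro p
    obtain ⟨q, hq, hdq⟩ := Nat.sInf_mem (hVne.image (dist1 p))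
    exact ⟨q, hq, hdq⟩
  have hDV : ∀ p ∈ V, D p = 0 := by
    intro p hp
    have h := hD_le p p hp
    have hz : dist1 p p = 0 := by simp [dist1]
    omega
  have hDU : ∀ p ∈ U, 3 ≤ D p := by
    intro p hp
    obtain ⟨q, hq, hdq⟩ := hD_mem p
    have := hgap p hp q hq
    omega
  have hlip : ∀ (p : Site 2) (i : Fin 2), D p ≤ D (p + unitVec i) + 1 ∧ D (p + unitVec i) ≤ D p + 1 := by
    intro p i
    obtain ⟨q1, hq1, hd1⟩ := hD_mem p
    obtain ⟨q2, hq2, hd2⟩ := hD_mem (p + unitVec i)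
    have h1 := hD_le p q2 hq2
    have h2 := hD_le (p + unitVec i) q1 hq1
    have h3 := dist1_step p q2 i
    have h4 := dist1_step p q1 i
    omega
  set z : Site 2 → ℤ := fun p =>
    if D p = 0 then y p
    else if D p = 1 then (if p ∈ S then y p else (y p).sign)
    else if D p = 2 then (if p ∈ S then x p else (x p).sign)
    else x p with hz
  have key : ∀ a : ℤ, a ≠ 0 → a.natAbs ≤ M →
      (a ≠ 0 ∧ a.natAbs ≤ M) ∧ (a.sign ≠ 0 ∧ a.sign.natAbs ≤ M) := by
    intro a ha hle
    refine ⟨⟨ha, hle⟩, ?_, ?_⟩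
    · simpa [Int.sign_eq_zero_iff_zero] using ha
    · rw [Int.natAbs_sign_of_ne_zero ha]; omega
  refine ⟨z, ⟨?_, ?_⟩, ?_, ?_, ?_⟩
  · intro p
    have hxp := hx1 p; have hyp := hy1 p
    simp only [hz]
    split_ifs <;>
      first
        | exact (key (x p) hxp.1 hxp.2).1
        | exact (key (y p) hyp.1 hyp.2).1
        | exact (key (x p) hxp.1 hxp.2).2
        | exact (key (y p) hyp.1 hyp.2).2
  · intro p i
    have hlp := hlip p i
    have h1 : -1 ≤ x p * x (p + unitVec i) := hx2 p i
    have h2 : -1 ≤ y p * y (p + unitVec i) := hy2 p i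
    have h3 := sign_mul_le _ _ (hx1 p).1 h1
    have h4 := mul_sign_le _ _ (hx1 (p + unitVec i)).1 h1
    have h5 := sign_mul_le _ _ (hy1 p).1 h2
    have h6 := mul_sign_le _ _ (hy1 (p + unitVec i)).1 h2
    have h8 : p ∈ S → x p = y p := fun h => (hxs p h).trans (hys p h).symm
    have h9 : p + unitVec i ∈ S → x (p + unitVec i) = y (p + unitVec i) :=
      fun h => (hxs _ h).trans (hys _ h).symm
    simp only [hz]
    split_ifs <;>
      first
        | omega
        | exact h1
        | exact h2
        | exact h3
        | exact h4
        | exact h5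
        | exact h6
        | exact sign_sign_le _ _
        | (rw [← h8 ‹p ∈ S›]; exact h1)
        | (rw [← h8 ‹p ∈ S›]; exact h4)
        | (rw [h9 ‹p + unitVec i ∈ S›]; exact h5)
        | (rw [← h9 ‹p + unitVec i ∈ S›]; exact h1)
        | (rw [h8 ‹p ∈ S›]; exact h6)
        | (rw [← h9 ‹p + unitVec i ∈ S›]; exact h3)
  · intro p hp
    have h3 := hDU p hp
    simp only [hz]
    rw [if_neg (by omega), if_neg (by omega), if_neg (by omega)]
    exact hxu p hp
  · intro p hp
    simp only [hz]
    split_ifs <;>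
      first
        | exact hys p hp
        | exact hxs p hp
  · intro p hp
    simp only [hz]
    rw [if_pos (hDV p hp)]
    exact hyv p hp
end

section
/- In the shift space X_g^d, for any finite W ⊆ Z^d and any globally admissible boundary configuration δ on ∂W, there exists a unique configuration θ_δ on W, maximal in the coordinatewise order, such that θ_δ δ is globally admissible and w ≼ θ_δ for every configuration w on W such that wδ is locally admissible. Moreover, the sitewise maximum of two configurations that are locally admissible with δ is again locally admissible with δ. -/
open Classical

def globallyAdm {d : ℕ} {A : Type*} (X : Set (Site d → A)) (S : Set (Site d))
    (u : Site d → A) : Prop := ∃ x ∈ X, ∀ p ∈ S, x p = u p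

/-- The nearest-neighbour SFT `X_g^d` over alphabet `{0, 1, …, g}` where adjacent sites
differ by at most `1`. -/
def Xgd (g d : ℕ) : Set (Site d → ℤ) :=
  {x | (∀ p : Site d, 0 ≤ x p ∧ x p ≤ g) ∧
       ∀ (p : Site d) (i : Fin d), |x p - x (p + unitVec i)| ≤ 1}

/-- `w δ` is locally admissible for `X_g^d`: `w` (on `W`) takes values in `{0,…,g}` and no
edge inside `W ∪ ∂W` of the combined configuration (`w` on `W`, `δ` on `∂W`) has a
difference larger than `1`. -/
def locAdmWith (g : ℕ) {d : ℕ} (W : Set (Site d)) (w δ : Site d → ℤ) : Prop :=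
  (∀ p ∈ W, 0 ≤ w p ∧ w p ≤ g) ∧
  ∀ p ∈ W ∪ bd W, ∀ i : Fin d, p + unitVec i ∈ W ∪ bd W →
    |(if p ∈ W then w p else δ p) -
      (if p + unitVec i ∈ W then w (p + unitVec i) else δ (p + unitVec i))| ≤ 1

lemma dist1_add_unitVec {d : ℕ} (p : Site d) (i : Fin d) :
    dist1 (p + unitVec i) p = 1 := by
  unfold dist1 unitVec
  have : ∀ j : Fin d, ((p + fun j => if j = i then (1:ℤ) else 0) j - p j).natAbs
      = if j = i then 1 else 0 := by
    intro j
    by_cases h : j = i <;> simp [Pi.add_apply, h]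
  simp only [this]
  simp

lemma dist1_unitVec_add {d : ℕ} (p : Site d) (i : Fin d) :
    dist1 p (p + unitVec i) = 1 := by
  unfold dist1 unitVec
  have : ∀ j : Fin d, (p j - (p + fun j => if j = i then (1:ℤ) else 0) j).natAbs
      = if j = i then 1 else 0 := by
    intro j
    by_cases h : j = i <;> simp [Pi.add_apply, h]
  simp only [this]
  simp

/-- Existence and uniqueness of the maximal configuration `θ_δ` on `W` for a globally
admissible boundary configuration `δ` on `∂W`, together with the fact that the sitewise
maximum of two configurations locally admissible with `δ` is again locally admissible. -/
theorem xgd_maximal_configuration {g d : ℕ} (W : Set (Site d)) (hW : W.Finite)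
    (δ : Site d → ℤ) (hδ : globallyAdm (Xgd g d) (bd W) δ) :
    (∃ θ : Site d → ℤ,
      (∃ x ∈ Xgd g d, (∀ p ∈ W, x p = θ p) ∧ ∀ p ∈ bd W, x p = δ p) ∧
      (∀ w : Site d → ℤ, locAdmWith g W w δ → ∀ p ∈ W, w p ≤ θ p) ∧
      ∀ θ' : Site d → ℤ,
        (∃ x ∈ Xgd g d, (∀ p ∈ W, x p = θ' p) ∧ ∀ p ∈ bd W, x p = δ p) →
        (∀ w : Site d → ℤ, locAdmWith g W w δ → ∀ p ∈ W, w p ≤ θ' p) →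
        ∀ p ∈ W, θ' p = θ p) ∧
    ∀ w₁ w₂ : Site d → ℤ, locAdmWith g W w₁ δ → locAdmWith g W w₂ δ →
      locAdmWith g W (fun p => max (w₁ p) (w₂ p)) δ := by
  obtain ⟨x, hx, hxδ⟩ := hδ
  -- sitewise max of locally admissible configurations
  have hmax : ∀ w₁ w₂ : Site d → ℤ, locAdmWith g W w₁ δ → locAdmWith g W w₂ δ →
      locAdmWith g W (fun p => max (w₁ p) (w₂ p)) δ := by
    intro w₁ w₂ h₁ h₂
    obtain ⟨h₁v, h₁e⟩ := h₁
    obtain ⟨h₂v, h₂e⟩ := h₂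
    refine ⟨fun p hp => ⟨le_max_of_le_left (h₁v p hp).1,
      max_le (h₁v p hp).2 (h₂v p hp).2⟩, ?_⟩
    have key : ∀ p : Site d, (if p ∈ W then max (w₁ p) (w₂ p) else δ p)
        = max (if p ∈ W then w₁ p else δ p) (if p ∈ W then w₂ p else δ p) := by
      intro p; by_cases h : p ∈ W <;> simp [h]
    intro p hp i hq
    rw [key p, key (p + unitVec i)]
    exact le_trans (abs_max_sub_max_le_max _ _ _ _)
      (max_le (h₁e p hp i hq) (h₂e p hp i hq))
  refine ⟨?_, hmax⟩
  -- extension of a locally admissible configuration to a point of Xgd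
  have hext : ∀ w : Site d → ℤ, locAdmWith g W w δ →
      ∃ y ∈ Xgd g d, (∀ p ∈ W, y p = w p) ∧ ∀ p ∈ bd W, y p = δ p := by
    intro w hw
    obtain ⟨hv, he⟩ := hw
    refine ⟨fun p => if p ∈ W then w p else x p, ⟨?_, ?_⟩, ?_, ?_⟩
    · intro p
      by_cases hp : p ∈ W
      · simpa [hp] using hv p hp
      · simpa [hp] using hx.1 p
    · intro p i
      by_cases hp : p ∈ W <;> by_cases hq : p + unitVec i ∈ W
      · have := he p (Or.inl hp) i (Or.inl hq)
        simpa [hp, hq] using this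
      · have hqb : p + unitVec i ∈ bd W :=
          ⟨hq, p, hp, dist1_add_unitVec p i⟩
        have := he p (Or.inl hp) i (Or.inr hqb)
        rw [if_pos hp, if_neg hq] at this
        simpa [hp, hq, hxδ _ hqb] using this
      · have hpb : p ∈ bd W := ⟨hp, p + unitVec i, hq, dist1_unitVec_add p i⟩
        have := he p (Or.inr hpb) i (Or.inl hq)
        rw [if_neg hp, if_pos hq] at this
        simpa [hp, hq, hxδ _ hpb] using this
      · simpa [hp, hq] using hx.2 p i
    · intro p hp; simp [hp]
    · intro p hp; simp [hp.1, hxδ p hp]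
  -- a restriction of a point of Xgd agreeing with δ on the boundary is locally admissible
  have hrestr : ∀ θ' : Site d → ℤ,
      (∃ y ∈ Xgd g d, (∀ p ∈ W, y p = θ' p) ∧ ∀ p ∈ bd W, y p = δ p) →
      locAdmWith g W θ' δ := by
    rintro θ' ⟨y, hy, hyW, hyB⟩
    constructor
    · intro p hp; rw [← hyW p hp]; exact hy.1 p
    · intro p hp i hq
      have e1 : (if p ∈ W then θ' p else δ p) = y p := by
        by_cases h : p ∈ W
        · simp [h, hyW p h]
        · have hb : p ∈ bd W := hp.resolve_left h
          simp [h, hyB p hb]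
      have e2 : (if p + unitVec i ∈ W then θ' (p + unitVec i) else δ (p + unitVec i))
          = y (p + unitVec i) := by
        by_cases h : p + unitVec i ∈ W
        · simp [h, hyW _ h]
        · have hb : p + unitVec i ∈ bd W := hq.resolve_left h
          simp [h, hyB _ hb]
      rw [e1, e2]
      exact hy.2 p i
  -- the finite set of locally admissible configurations vanishing outside W
  set S' : Set (Site d → ℤ) :=
    {w | locAdmWith g W w δ ∧ ∀ p, p ∉ W → w p = 0} with hS'
  have : Finite ↥W := hW.to_subtype
  have hfin : S'.Finite := by
    have h1 : (Set.pi (Set.univ : Set ↥W) (fun _ => Set.Icc (0:ℤ) g)).Finite :=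
      Set.Finite.pi (fun _ => Set.finite_Icc _ _)
    refine Set.Finite.of_finite_image (f := fun w => (fun p : ↥W => w p))
      (h1.subset ?_) ?_
    · rintro f ⟨w, ⟨⟨hv, _⟩, _⟩, rfl⟩ p _
      exact hv p p.2
    · intro w₁ h₁ w₂ h₂ h
      funext p
      by_cases hp : p ∈ W
      · exact congrFun h ⟨p, hp⟩
      · rw [h₁.2 p hp, h₂.2 p hp]
  have hzero : ∀ w : Site d → ℤ, locAdmWith g W w δ →
      (fun p => if p ∈ W then w p else 0) ∈ S' := by
    intro w hw
    refine ⟨⟨fun p hp => by simpa [hp] using hw.1 p hp, ?_⟩, fun p hp => by simp [hp]⟩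
    intro p hp i hq
    have := hw.2 p hp i hq
    by_cases h1 : p ∈ W <;> by_cases h2 : p + unitVec i ∈ W <;>
      simpa [h1, h2] using this
  have hne : S'.Nonempty := by
    refine ⟨fun p => if p ∈ W then x p else 0, hzero x (hrestr x ⟨x, hx, fun p _ => rfl, fun p hp => hxδ p hp⟩)⟩
  -- take the supremum
  have hclosed : ∀ a ∈ S', ∀ b ∈ S', a ⊔ b ∈ S' := by
    rintro a ⟨ha, haz⟩ b ⟨hb, hbz⟩
    exact ⟨hmax a b ha hb, fun p hp => by
      show max (a p) (b p) = 0
      rw [haz p hp, hbz p hp, max_self]⟩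
  have htne : hfin.toFinset.Nonempty := by
    simpa [Set.Finite.toFinset_nonempty] using hne
  set θ : Site d → ℤ := hfin.toFinset.sup' htne id with hθdef
  have hθmem : θ ∈ S' := by
    have := Finset.sup'_mem S' hclosed hfin.toFinset htne id
      (fun w hw => by simpa using (hfin.mem_toFinset.mp hw))
    exact this
  have hdom : ∀ w : Site d → ℤ, locAdmWith g W w δ → ∀ p ∈ W, w p ≤ θ p := by
    intro w hw p hp
    have hmem : (fun p => if p ∈ W then w p else 0) ∈ hfin.toFinset :=
      hfin.mem_toFinset.mpr (hzero w hw)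
    have hle : (fun p => if p ∈ W then w p else 0) ≤ θ :=
      Finset.le_sup' (f := id) hmem
    have := hle p
    simpa [hp] using this
  refine ⟨θ, hext θ hθmem.1, hdom, ?_⟩
  intro θ' hθ'ext hθ'dom p hp
  have h1 : θ' p ≤ θ p := hdom θ' (hrestr θ' hθ'ext) p hp
  have h2 : θ p ≤ θ' p := hθ'dom θ hθmem.1 p hp
  omega
end

section
/- In X_g^d (which satisfies TSSM with gap g), for any finite W and any two globally admissible boundary configurations δ_1, δ_2 on ∂W, the maximal configurations θ_{δ_1}, θ_{δ_2} on W satisfy: the set of sites where θ_{δ_1} and θ_{δ_2} differ is contained in N_g(Σ_{∂W}(δ_1,δ_2)) ∩ W. -/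
open Classical

section Aux

variable {d : ℕ}

lemma dist1_self (p : Site d) : dist1 p p = 0 := by
  simp [dist1]

lemma dist1_comm (p q : Site d) : dist1 p q = dist1 q p := by
  unfold dist1; exact Finset.sum_congr rfl fun i _ => by omega

lemma dist1_triangle (p q r : Site d) : dist1 p r ≤ dist1 p q + dist1 q r := by
  unfold dist1; rw [← Finset.sum_add_distrib]
  exact Finset.sum_le_sum fun i _ => by omega

lemma dist1_eq_zero {p q : Site d} (h : dist1 p q = 0) : p = q := by
  funext i
  have := Finset.sum_eq_zero_iff.mp h i (Finset.mem_univ i)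
  omega

lemma dist1_unitVec (p : Site d) (i : Fin d) : dist1 p (p + unitVec i) = 1 := by
  unfold dist1 unitVec
  have h : ∀ j : Fin d, (p j - (p + fun j => if j = i then (1:ℤ) else 0) j).natAbs
      = if j = i then 1 else 0 := by
    intro j
    simp only [Pi.add_apply]
    split <;> omega
  rw [Finset.sum_congr rfl fun j _ => h j]
  simp

lemma xgd_lipschitz {g : ℕ} {x : Site d → ℤ} (hx : x ∈ Xgd g d) (p q : Site d) :
    |x p - x q| ≤ dist1 p q := by
  generalize hn : dist1 p q = n
  induction n generalizing p with
  | zero => rw [dist1_eq_zero hn]; simp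
  | succ n ih =>
    obtain ⟨i, hi⟩ : ∃ i, (p i - q i).natAbs ≠ 0 := by
      by_contra h; push_neg at h
      have : dist1 p q = 0 := Finset.sum_eq_zero fun i _ => h i
      omega
    have hne : p i ≠ q i := fun h => hi (by rw [h]; simp)
    rcases lt_or_gt_of_ne hne with hlt | hgt
    · -- step towards q : p' = p + unitVec i
      set p' := p + unitVec i with hp'
      have hstep : |x p - x p'| ≤ 1 := hx.2 p i
      have hd : dist1 p' q = n := by
        have hterm : ∀ j : Fin d, (p j - q j).natAbs
            = (p' j - q j).natAbs + (if j = i then 1 else 0) := by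
          intro j
          simp only [hp', Pi.add_apply, unitVec]
          split
          · next h => subst h; omega
          · omega
        have hsum : dist1 p q = dist1 p' q + 1 := by
          unfold dist1
          rw [Finset.sum_congr rfl fun j _ => hterm j, Finset.sum_add_distrib]
          simp
        omega
      have h2 := ih p' hd
      calc |x p - x q| ≤ |x p - x p'| + |x p' - x q| := abs_sub_le _ _ _
        _ ≤ 1 + (n : ℤ) := add_le_add hstep h2
        _ = ((n + 1 : ℕ) : ℤ) := by push_cast; ring
    · -- step towards q : p' = p - unitVec i
      set p' := p - unitVec i with hp'
      have hpe : p' + unitVec i = p := by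
        rw [hp']; abel
      have hstep : |x p - x p'| ≤ 1 := by
        rw [abs_sub_comm]
        have := hx.2 p' i
        rwa [hpe] at this
      have hd : dist1 p' q = n := by
        have hterm : ∀ j : Fin d, (p j - q j).natAbs
            = (p' j - q j).natAbs + (if j = i then 1 else 0) := by
          intro j
          simp only [hp', Pi.sub_apply, unitVec]
          split
          · next h => subst h; omega
          · omega
        have hsum : dist1 p q = dist1 p' q + 1 := by
          unfold dist1
          rw [Finset.sum_congr rfl fun j _ => hterm j, Finset.sum_add_distrib]
          simp
        omega
      have h2 := ih p' hd
      calc |x p - x q| ≤ |x p - x p'| + |x p' - x q| := abs_sub_le _ _ _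
        _ ≤ 1 + (n : ℤ) := add_le_add hstep h2
        _ = ((n + 1 : ℕ) : ℤ) := by push_cast; ring

lemma bd_finite {W : Set (Site d)} (hW : W.Finite) : (bd W).Finite := by
  have hsub : bd W ⊆ ⋃ q ∈ W, Set.pi Set.univ (fun i => Set.Icc (q i - 1) (q i + 1)) := by
    rintro p ⟨hpW, q, hq, hd⟩
    refine Set.mem_biUnion hq ?_
    intro i _
    have h1 : (p i - q i).natAbs ≤ dist1 p q :=
      Finset.single_le_sum (f := fun j => (p j - q j).natAbs)
        (fun j _ => Nat.zero_le _) (Finset.mem_univ i)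
    rw [hd] at h1
    simp only [Set.mem_Icc]
    omega
  exact Set.Finite.subset
    (hW.biUnion fun q _ => Set.Finite.pi fun i => Set.finite_Icc _ _) hsub

lemma theta_formula {g : ℕ} {W : Set (Site d)} (B : Finset (Site d))
    (hB : ∀ b, b ∈ B ↔ b ∈ bd W) (hBne : B.Nonempty)
    {δ θ x : Site d → ℤ} (hx : x ∈ Xgd g d)
    (hxW : ∀ p ∈ W, x p = θ p) (hxB : ∀ p ∈ bd W, x p = δ p)
    (hmax : ∀ w, locAdmWith g W w δ → ∀ p ∈ W, w p ≤ θ p) :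
    ∀ p ∈ W, θ p = min (g : ℤ) (B.inf' hBne (fun b => δ b + dist1 p b)) := by
  set F : Site d → ℤ := fun p => min (g:ℤ) (B.inf' hBne (fun b => δ b + dist1 p b)) with hF
  have hLip := xgd_lipschitz hx
  have hδeq : ∀ b ∈ B, δ b = x b := fun b hb => (hxB b ((hB b).mp hb)).symm
  -- F is 1-Lipschitz
  have hFlip : ∀ p q : Site d, F p ≤ F q + dist1 p q := by
    intro p q
    obtain ⟨b, hbB, hbeq⟩ := Finset.exists_mem_eq_inf' hBne (fun b => δ b + dist1 q b)
    have c0 : (0:ℤ) ≤ (dist1 p q : ℤ) := Int.natCast_nonneg _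
    have htri : (dist1 p b : ℤ) ≤ (dist1 p q : ℤ) + (dist1 q b : ℤ) := by
      exact_mod_cast dist1_triangle p q b
    have h2 : F p ≤ (B.inf' hBne fun b => δ b + dist1 q b) + dist1 p q := by
      refine le_trans (min_le_right _ _) ?_
      refine le_trans (Finset.inf'_le _ hbB) ?_
      rw [hbeq]
      linarith
    have h3 : F p ≤ min ((g:ℤ) + dist1 p q)
        ((B.inf' hBne fun b => δ b + dist1 q b) + dist1 p q) :=
      le_min (le_trans (min_le_left _ _) (by linarith)) h2
    calc F p ≤ _ := h3
      _ = F q + dist1 p q := by rw [min_add_add_right]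
  -- F equals δ on the boundary
  have hFbd : ∀ b ∈ bd W, F b = δ b := by
    intro b hb
    have hbB : b ∈ B := (hB b).mpr hb
    have hub : F b ≤ δ b := by
      refine le_trans (min_le_right _ _) ?_
      have := Finset.inf'_le (fun s => δ s + (dist1 b s : ℤ)) hbB
      simpa only [dist1_self, Nat.cast_zero, add_zero] using this
    have hlb : δ b ≤ F b := by
      refine le_min ?_ (Finset.le_inf' _ _ ?_)
      · rw [← hxB b hb]
        exact (hx.1 b).2
      · intro s hsB
        have h1 := hLip b s
        rw [hxB b hb, hxB s ((hB s).mp hsB)] at h1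
        have := le_abs_self (δ b - δ s)
        linarith
    exact le_antisymm hub hlb
  -- F is locally admissible
  have hadm : locAdmWith g W F δ := by
    constructor
    · intro p _
      constructor
      · refine le_min (Int.natCast_nonneg _) (Finset.le_inf' _ _ ?_)
        intro s hsB
        have h0 : 0 ≤ δ s := by rw [hδeq s hsB]; exact (hx.1 s).1
        have := Int.natCast_nonneg (dist1 p s)
        linarith
      · exact min_le_left _ _
    · intro p hpU i hqU
      have key : ∀ r, r ∈ W ∪ bd W → (if r ∈ W then F r else δ r) = F r := by
        intro r hr
        split
        · rfl
        · next h => exact (hFbd r (hr.resolve_left h)).symm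
      rw [key p hpU, key _ hqU]
      have h1 := hFlip p (p + unitVec i)
      have h2 := hFlip (p + unitVec i) p
      have e1 : dist1 p (p + unitVec i) = 1 := dist1_unitVec p i
      have e2 : dist1 (p + unitVec i) p = 1 := by rw [dist1_comm]; exact e1
      rw [e1] at h1; rw [e2] at h2
      push_cast at h1 h2
      rw [abs_le]
      constructor <;> linarith
  intro p hp
  refine le_antisymm ?_ (hmax F hadm p hp)
  refine le_min ?_ (Finset.le_inf' _ _ ?_)
  · rw [← hxW p hp]; exact (hx.1 p).2
  · intro b hbB
    have h1 := hLip p b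
    rw [hxW p hp, hxB b ((hB b).mp hbB)] at h1
    have := le_abs_self (θ p - δ b)
    linarith

lemma theta_const_g {g : ℕ} {W : Set (Site d)} (hbd : bd W = ∅)
    {δ θ x : Site d → ℤ} (hx : x ∈ Xgd g d) (hxW : ∀ p ∈ W, x p = θ p)
    (hmax : ∀ w, locAdmWith g W w δ → ∀ p ∈ W, w p ≤ θ p) :
    ∀ p ∈ W, θ p = (g : ℤ) := by
  intro p hp
  refine le_antisymm (by rw [← hxW p hp]; exact (hx.1 p).2) ?_
  refine hmax (fun _ => (g:ℤ)) ⟨fun q _ => ⟨Int.natCast_nonneg _, le_refl _⟩, ?_⟩ p hp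
  intro q hq i hq'
  rw [hbd, Set.union_empty] at hq hq'
  simp [hq, hq']

lemma key_lemma {g : ℕ} {W : Set (Site d)} {B : Finset (Site d)}
    (hB : ∀ b, b ∈ B ↔ b ∈ bd W) (hBne : B.Nonempty)
    {δ₁ δ₂ x₁ : Site d → ℤ} (hx₁ : x₁ ∈ Xgd g d) (hx₁B : ∀ b ∈ bd W, x₁ b = δ₁ b)
    {p : Site d} {t₁ t₂ : ℤ}
    (h₁ : t₁ = min (g:ℤ) (B.inf' hBne fun b => δ₁ b + dist1 p b))
    (h₂ : t₂ = min (g:ℤ) (B.inf' hBne fun b => δ₂ b + dist1 p b))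
    (hlt : t₁ < t₂) :
    ∃ q ∈ bd W, δ₁ q ≠ δ₂ q ∧ dist1 p q ≤ g := by
  have hg : t₂ ≤ (g:ℤ) := h₂ ▸ min_le_left _ _
  obtain ⟨b, hbB, hbeq⟩ := Finset.exists_mem_eq_inf' hBne (fun b => δ₁ b + dist1 p b)
  set A := B.inf' hBne (fun b => δ₁ b + (dist1 p b : ℤ)) with hA
  have hAlt : t₁ = A := by
    rcases le_or_gt A (g:ℤ) with h | h
    · rw [h₁, min_eq_right h]
    · exfalso
      rw [h₁, min_eq_left h.le] at hlt
      linarith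
  have ht₁ : t₁ = δ₁ b + dist1 p b := hAlt.trans hbeq
  have ht₂ : t₂ ≤ δ₂ b + dist1 p b :=
    le_trans (h₂ ▸ min_le_right _ _) (Finset.inf'_le _ hbB)
  have hδlt : δ₁ b < δ₂ b := by linarith
  have hbbd : b ∈ bd W := (hB b).mp hbB
  have hδ0 : 0 ≤ δ₁ b := by rw [← hx₁B b hbbd]; exact (hx₁.1 b).1
  have hdg : (dist1 p b : ℤ) ≤ (g:ℤ) := by linarith
  exact ⟨b, hbbd, ne_of_lt hδlt, by exact_mod_cast hdg⟩

end Aux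

/-- In `X_g^d` (which satisfies TSSM with gap `g`), the maximal configurations `θ_{δ₁}`,
`θ_{δ₂}` for two globally admissible boundary conditions `δ₁, δ₂` on `∂W` differ only on
`N_g(Σ_{∂W}(δ₁,δ₂)) ∩ W`. -/
theorem xgd_maximal_configurations_differ_near_boundary_disagreement
    {g d : ℕ} (W : Set (Site d)) (hW : W.Finite)
    (δ₁ δ₂ θ₁ θ₂ : Site d → ℤ)
    (hδ₁ : globallyAdm (Xgd g d) (bd W) δ₁)
    (hδ₂ : globallyAdm (Xgd g d) (bd W) δ₂)
    (hθ₁ : (∃ x ∈ Xgd g d, (∀ p ∈ W, x p = θ₁ p) ∧ ∀ p ∈ bd W, x p = δ₁ p) ∧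
      ∀ w : Site d → ℤ, locAdmWith g W w δ₁ → ∀ p ∈ W, w p ≤ θ₁ p)
    (hθ₂ : (∃ x ∈ Xgd g d, (∀ p ∈ W, x p = θ₂ p) ∧ ∀ p ∈ bd W, x p = δ₂ p) ∧
      ∀ w : Site d → ℤ, locAdmWith g W w δ₂ → ∀ p ∈ W, w p ≤ θ₂ p) :
    ∀ p ∈ W, θ₁ p ≠ θ₂ p → ∃ q ∈ bd W, δ₁ q ≠ δ₂ q ∧ dist1 p q ≤ g := by
  intro p hp hne
  obtain ⟨x₁, hx₁, hx₁W, hx₁B⟩ := hθ₁.1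
  obtain ⟨x₂, hx₂, hx₂W, hx₂B⟩ := hθ₂.1
  by_cases hbd : bd W = ∅
  · exact absurd ((theta_const_g hbd hx₁ hx₁W hθ₁.2 p hp).trans
      (theta_const_g hbd hx₂ hx₂W hθ₂.2 p hp).symm) hne
  · have hfin := bd_finite hW
    set B := hfin.toFinset with hBdef
    have hB : ∀ b, b ∈ B ↔ b ∈ bd W := fun b => hfin.mem_toFinset
    have hBne : B.Nonempty := by
      obtain ⟨b, hb⟩ := Set.nonempty_iff_ne_empty.mpr hbd
      exact ⟨b, (hB b).mpr hb⟩
    have h₁ := theta_formula B hB hBne hx₁ hx₁W hx₁B hθ₁.2 p hp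
    have h₂ := theta_formula B hB hBne hx₂ hx₂W hx₂B hθ₂.2 p hp
    rcases hne.lt_or_gt with hlt | hlt
    · exact key_lemma hB hBne hx₁ hx₁B h₁ h₂ hlt
    · obtain ⟨q, hq, hδ, hd⟩ := key_lemma hB hBne hx₂ hx₂B h₂ h₁ hlt
      exact ⟨q, hq, hδ.symm, hd⟩
end
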